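/- arXiv:math-ph/0212035 — 3 statements merged into one kernel-verified Lean document; each statement's English description precedes it below -/
import Mathlib

section
/- For the simple symmetric random walk of length N on Z^2 and any integer α-exponent scheme, let m = [N^{1/3}] and consider the event that the walk returns to the origin at all times k·4m for k = 1, …, ⌊N/(4m)⌋. The probability of this event is at least (K·m^{−3/2})^{N/(4m)} for the constant K from the local return probability bound, and on this event the range satisfies R_N ≤ 16 m² + 2m. -/
open Finset

/-- The unit step of a simple walk on `ℤ^n` given a direction `d`. -/
def stepVec (n : ℕ) (d : Fin n × Bool) : Fin n → ℤ :=
  fun j => if j = d.1 then (if d.2 then 1 else -1) else 0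

/-- Position after `i` steps of the walk encoded by the step sequence `s`. -/
def pos {n N : ℕ} (s : Fin N → Fin n × Bool) (i : ℕ) : Fin n → ℤ :=
  ∑ k ∈ Finset.univ.filter (fun k : Fin N => (k : ℕ) < i), stepVec n (s k)

/-- Contact matrix: `1` iff positions at distinct times agree. -/
def cm {n N : ℕ} (s : Fin N → Fin n × Bool) : Fin (N + 1) → Fin (N + 1) → Bool :=
  fun i j => decide ((i : ℕ) ≠ (j : ℕ) ∧ pos s i = pos s j)

/-- Degeneracy: number of walks of length `N` sharing the contact matrix of `s`. -/
def degC {n N : ℕ} (s : Fin N → Fin n × Bool) : ℕ :=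
  (Finset.univ.filter (fun s' : Fin N → Fin n × Bool => cm s' = cm s)).card

/-- Range: number of distinct sites visited. -/
def rangeRW {n N : ℕ} (s : Fin N → Fin n × Bool) : ℕ :=
  (Finset.univ.image (fun i : Fin (N + 1) => pos s (i : ℕ))).card

/-- Number of contact matrices realized by walks of length `N` on `ℤ^n`. -/
def W (n N : ℕ) : ℕ :=
  (Finset.univ.image (fun s : Fin N → Fin n × Bool => cm s)).card

noncomputable def gammaRW (n N : ℕ) : ℝ :=
  Real.log (W n N) / (N * Real.log (2 * n))

/-- Coarse-grained Shannon entropy of the contact-matrix partition, uniform measure. -/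
noncomputable def SC (n N : ℕ) : ℝ :=
  ∑ C : Fin (N + 1) → Fin (N + 1) → Bool,
    Real.negMulLog
      (((Finset.univ.filter (fun s : Fin N → Fin n × Bool => cm s = C)).card : ℝ) / (2 * n) ^ N)

noncomputable def deltaRW (n N : ℕ) : ℝ :=
  SC n N / (N * Real.log (2 * n))

/-- Expected range under the uniform measure. -/
noncomputable def ER (n N : ℕ) : ℝ :=
  (∑ s : Fin N → Fin n × Bool, (rangeRW s : ℝ)) / (2 * n) ^ N


def extS {N : ℕ} (s : Fin N → Fin 2 × Bool) : ℕ → Fin 2 × Bool :=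
  fun k => if h : k < N then s ⟨k, h⟩ else (0, true)

def posN (f : ℕ → Fin 2 × Bool) (i : ℕ) : Fin 2 → ℤ :=
  ∑ k ∈ Finset.range i, stepVec 2 (f k)

lemma pos_eq_posN {N : ℕ} (s : Fin N → Fin 2 × Bool) {i : ℕ} (hi : i ≤ N) :
    pos s i = posN (extS s) i := by
  unfold pos posN
  rw [Finset.sum_filter]
  have h1 : ∀ a : Fin N, (if (a:ℕ) < i then stepVec 2 (s a) else 0)
      = (fun k => if k < i then stepVec 2 (extS s k) else 0) (a:ℕ) := by
    intro a
    simp [extS, a.isLt]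
  rw [Finset.sum_congr rfl (fun a _ => h1 a),
    Fin.sum_univ_eq_sum_range (fun k => if k < i then stepVec 2 (extS s k) else 0) N,
    ← Finset.sum_filter]
  congr 1
  ext k
  simp only [Finset.mem_filter, Finset.mem_range]
  omega

lemma posN_zero (f : ℕ → Fin 2 × Bool) : posN f 0 = 0 := by simp [posN]

lemma posN_add (f : ℕ → Fin 2 × Bool) (i j : ℕ) :
    posN f (i + j) = posN f i + ∑ l ∈ Finset.range j, stepVec 2 (f (i + l)) := by
  unfold posN; exact Finset.sum_range_add _ i j

lemma step_abs (d : Fin 2 × Bool) :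
    |stepVec 2 d 0| + |stepVec 2 d 1| = 1 := by
  rcases d with ⟨j, b⟩
  fin_cases j <;> cases b <;> simp [stepVec]

lemma step_sum (d : Fin 2 × Bool) :
    stepVec 2 d 0 + stepVec 2 d 1 = 1 ∨ stepVec 2 d 0 + stepVec 2 d 1 = -1 := by
  rcases d with ⟨j, b⟩
  fin_cases j <;> cases b <;> simp [stepVec]

/-- L¹ bound on displacement. -/
lemma posN_dist (f : ℕ → Fin 2 × Bool) (i j : ℕ) :
    |posN f (i + j) 0 - posN f i 0| + |posN f (i + j) 1 - posN f i 1| ≤ (j : ℤ) := by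
  rw [posN_add]
  simp only [Pi.add_apply, add_sub_cancel_left]
  have e0 : (∑ l ∈ Finset.range j, stepVec 2 (f (i + l))) 0
      = ∑ l ∈ Finset.range j, stepVec 2 (f (i + l)) 0 := by simp
  have e1 : (∑ l ∈ Finset.range j, stepVec 2 (f (i + l))) 1
      = ∑ l ∈ Finset.range j, stepVec 2 (f (i + l)) 1 := by simp
  rw [e0, e1]
  have h := add_le_add (Finset.abs_sum_le_sum_abs (fun l => stepVec 2 (f (i + l)) 0) (Finset.range j))
    (Finset.abs_sum_le_sum_abs (fun l => stepVec 2 (f (i + l)) 1) (Finset.range j))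
  refine h.trans ?_
  rw [← Finset.sum_add_distrib]
  rw [Finset.sum_congr rfl (fun l _ => step_abs (f (i + l)))]
  simp

/-- Parity of coordinate sum. -/
lemma posN_parity (f : ℕ → Fin 2 × Bool) (i : ℕ) :
    (posN f i 0 + posN f i 1) % 2 = (i : ℤ) % 2 := by
  induction i with
  | zero => simp [posN]
  | succ n ih =>
    have h := posN_add f n 1
    simp only [Finset.range_one, Finset.sum_singleton, add_zero] at h
    rw [h]
    simp only [Pi.add_apply]
    rcases step_sum (f n) with h2 | h2 <;> push_cast <;> omega

lemma card_pi_filter {n₀ : ℕ} {X : Type*} [Fintype X] [DecidableEq X] (P : X → Prop)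
    [DecidablePred P] :
    (Finset.univ.filter (fun T : Fin n₀ → X => ∀ q, P (T q))).card
      = (Finset.univ.filter (fun x => P x)).card ^ n₀ := by
  rw [← Fintype.card_subtype, ← Fintype.card_subtype]
  rw [Fintype.card_congr (Equiv.subtypePiEquivPi (p := fun _ : Fin n₀ => P))]
  simp [Fintype.card_pi]

lemma div_mod_block {b q l : ℕ} (hb : 0 < b) (hl : l < b) :
    (q * b + l) / b = q ∧ (q * b + l) % b = l := by
  rw [Nat.mul_comm q b, Nat.mul_add_div hb, Nat.mul_add_mod]
  rw [Nat.div_eq_of_lt hl, Nat.mod_eq_of_lt hl]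
  omega

lemma card_E_ge (N b n₀ r : ℕ) (hb : 0 < b) (hr : r < b) (hNe : N = n₀ * b + r)
    (E : Finset (Fin N → Fin 2 × Bool))
    (hE : ∀ s : Fin N → Fin 2 × Bool,
      s ∈ E ↔ ∀ k : ℕ, 1 ≤ k → k * b ≤ N → pos s (k * b) = 0) :
    ((Finset.univ.filter (fun t : Fin b → Fin 2 × Bool => pos t b = 0)).card) ^ n₀ * 4 ^ r
      ≤ E.card := by
  classical
  set S : Finset ((Fin n₀ → Fin b → Fin 2 × Bool) × (Fin r → Fin 2 × Bool)) :=
    (Finset.univ.filter (fun T : Fin n₀ → Fin b → Fin 2 × Bool => ∀ q, pos (T q) b = 0)) ×ˢ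
      Finset.univ with hS
  have hcardS : S.card
      = ((Finset.univ.filter (fun t : Fin b → Fin 2 × Bool => pos t b = 0)).card) ^ n₀ * 4 ^ r := by
    rw [hS, Finset.card_product]
    congr 1
    · convert card_pi_filter (n₀ := n₀) (fun t : Fin b → Fin 2 × Bool => pos t b = 0)
        using 2
    · rw [Finset.card_univ, Fintype.card_pi]
      simp [Fintype.card_prod]
  rw [← hcardS]
  -- the injection
  set F : ((Fin n₀ → Fin b → Fin 2 × Bool) × (Fin r → Fin 2 × Bool)) → (Fin N → Fin 2 × Bool) :=
    fun Tu => fun k : Fin N =>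
      if h : (k : ℕ) < n₀ * b then
        Tu.1 ⟨(k : ℕ) / b, Nat.div_lt_of_lt_mul (by rwa [Nat.mul_comm])⟩
          ⟨(k : ℕ) % b, Nat.mod_lt _ hb⟩
      else Tu.2 ⟨(k : ℕ) - n₀ * b, by have := k.isLt; omega⟩ with hF
  apply Finset.card_le_card_of_injOn F
  · -- maps into E
    rintro ⟨T, u⟩ hTu
    rw [Finset.mem_coe, Finset.mem_product, Finset.mem_filter] at hTu
    obtain ⟨⟨-, hT⟩, -⟩ := hTu
    set s := F (T, u) with hs
    -- values of s inside blocks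
    have hval : ∀ q : ℕ, ∀ l : ℕ, (hq : q < n₀) → (hl : l < b) →
        extS s (q * b + l) = T ⟨q, hq⟩ ⟨l, hl⟩ := by
      intro q l hq hl
      have hlt : q * b + l < n₀ * b := by
        calc q * b + l < (q + 1) * b := by rw [Nat.add_mul]; omega
          _ ≤ n₀ * b := Nat.mul_le_mul_right _ hq
      have hltN : q * b + l < N := by omega
      rw [extS, dif_pos hltN, hs, hF]
      simp only
      rw [dif_pos hlt]
      obtain ⟨h1, h2⟩ := div_mod_block hb hl (q := q)
      congr 1 <;> [exact Fin.ext h1; exact Fin.ext h2]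
    -- returns at all multiples
    have hret : ∀ j : ℕ, j ≤ n₀ → posN (extS s) (j * b) = 0 := by
      intro j
      induction j with
      | zero => intro _; simp [posN]
      | succ q ih =>
        intro hq
        have hq' : q < n₀ := by omega
        have : (q + 1) * b = q * b + b := by ring
        rw [this, posN_add, ih (by omega)]
        have : ∑ l ∈ Finset.range b, stepVec 2 (extS s (q * b + l))
            = posN (extS (T ⟨q, hq'⟩)) b := by
          unfold posN
          refine Finset.sum_congr rfl fun l hl => ?_
          rw [Finset.mem_range] at hl
          rw [hval q l hq' hl, extS, dif_pos hl]
        rw [this, ← pos_eq_posN _ le_rfl, hT ⟨q, hq'⟩]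
        simp
    rw [Finset.mem_coe, hE]
    intro k hk1 hkN
    have hkn : k ≤ n₀ := by
      by_contra h
      push_neg at h
      have h2 : (n₀ + 1) * b ≤ k * b := Nat.mul_le_mul_right _ h
      have h3 : (n₀ + 1) * b = n₀ * b + b := by ring
      omega
    rw [pos_eq_posN _ hkN]
    exact hret k hkn
  · -- injectivity
    rintro ⟨T, u⟩ - ⟨T', u'⟩ - h
    have hTT : T = T' := by
      funext q l
      have hlt : (q : ℕ) * b + (l : ℕ) < n₀ * b := by
        calc (q:ℕ) * b + (l:ℕ) < ((q:ℕ) + 1) * b := by rw [Nat.add_mul]; have := l.isLt; omega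
          _ ≤ n₀ * b := Nat.mul_le_mul_right _ q.isLt
      have hltN : (q : ℕ) * b + (l : ℕ) < N := by omega
      have := congrFun h ⟨(q:ℕ) * b + (l:ℕ), hltN⟩
      rw [hF] at this
      simp only [dif_pos hlt] at this
      obtain ⟨h1, h2⟩ := div_mod_block hb l.isLt (q := (q:ℕ))
      convert this using 2 <;>
        first
          | exact (Fin.ext h1.symm)
          | exact (Fin.ext h2.symm)
    have hUU : u = u' := by
      funext i
      have hltN : n₀ * b + (i : ℕ) < N := by have := i.isLt; omega
      have := congrFun h ⟨n₀ * b + (i : ℕ), hltN⟩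
      rw [hF] at this
      simp only [dif_neg (by omega : ¬ (n₀ * b + (i:ℕ) < n₀ * b))] at this
      convert this using 2 <;>
        · apply Fin.ext
          show (i : ℕ) = n₀ * b + (i : ℕ) - n₀ * b
          omega
    rw [hTT, hUU]

lemma range_bound (N m n₀ r : ℕ) (hm1 : 1 ≤ m) (hr : r < 4 * m)
    (hNe : N = n₀ * (4 * m) + r)
    (s : Fin N → Fin 2 × Bool)
    (hs : ∀ k : ℕ, 1 ≤ k → k * (4 * m) ≤ N → pos s (k * (4 * m)) = 0) :
    rangeRW s ≤ 16 * m ^ 2 + 2 * m := by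
  classical
  set b := 4 * m with hb
  have hb0 : 0 < b := by omega
  set f := extS s with hf
  -- norm bound inside the periodic part
  have hnorm : ∀ i : ℕ, i ≤ n₀ * b → |posN f i 0| + |posN f i 1| ≤ (2 * m : ℤ) := by
    intro i hi
    have hiN : i ≤ N := by omega
    set q := i / b with hq
    set r' := i % b with hr'
    have hqr : i = q * b + r' := by
      rw [hq, hr', Nat.mul_comm (i / b) b]
      exact (Nat.div_add_mod i b).symm
    have hr'b : r' < b := Nat.mod_lt _ hb0
    have hret : ∀ k : ℕ, k ≤ n₀ → posN f (k * b) = 0 := by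
      intro k hk
      rcases Nat.eq_zero_or_pos k with hk0 | hk1
      · simp [hk0, posN]
      · have hkN : k * b ≤ N := by
          have : k * b ≤ n₀ * b := Nat.mul_le_mul_right _ hk
          omega
        rw [hf, ← pos_eq_posN _ hkN]
        exact hs k hk1 hkN
    rcases le_or_gt r' (2 * m) with hc | hc
    · -- use left endpoint
      have hq0 : posN f (q * b) = 0 := by
        apply hret
        have : q * b ≤ n₀ * b := by omega
        exact Nat.le_of_mul_le_mul_right this hb0
      have hd := posN_dist f (q * b) r'
      rw [← hqr, hq0] at hd
      simp only [Pi.zero_apply, sub_zero] at hd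
      have : (r' : ℤ) ≤ (2 * m : ℤ) := by exact_mod_cast hc
      omega
    · -- use right endpoint
      have hr'1 : 1 ≤ r' := by omega
      have hqn : q + 1 ≤ n₀ := by
        have h1 : q * b < n₀ * b := by omega
        have := Nat.lt_of_mul_lt_mul_right h1
        omega
      have hq0 : posN f ((q + 1) * b) = 0 := hret (q + 1) hqn
      have hd := posN_dist f i (b - r')
      have he : i + (b - r') = (q + 1) * b := by rw [Nat.add_mul]; omega
      rw [he, hq0] at hd
      simp only [Pi.zero_apply, zero_sub, abs_neg] at hd
      have : ((b - r' : ℕ) : ℤ) ≤ (2 * m : ℤ) := by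
        have : b - r' ≤ 2 * m := by omega
        exact_mod_cast this
      omega
  -- parity
  have hpar : ∀ i : ℕ, (posN f i 0 + posN f i 1) % 2 = (i : ℤ) % 2 := posN_parity f
  -- target superset
  set Ev : Finset ℤ := (Finset.Icc (-(m : ℤ)) m).image (fun j => 2 * j) with hEv
  set Od : Finset ℤ := (Finset.Icc (-(m : ℤ)) ((m : ℤ) - 1)).image (fun j => 2 * j + 1) with hOd
  set ψ : ℤ × ℤ → (Fin 2 → ℤ) := fun p => fun i => if i = 0 then (p.1 + p.2) / 2 else (p.1 - p.2) / 2
    with hψ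
  set A : Finset (Fin 2 → ℤ) := ((Ev ×ˢ Ev) ∪ (Od ×ˢ Od)).image ψ with hA
  have hmemA : ∀ v : Fin 2 → ℤ, |v 0| + |v 1| ≤ (2 * m : ℤ) → v ∈ A := by
    intro v hv
    have hu : |v 0 + v 1| ≤ (2 * m : ℤ) := (abs_add_le _ _).trans hv
    have hw : |v 0 - v 1| ≤ (2 * m : ℤ) := (abs_sub _ _).trans hv
    rw [abs_le] at hu hw
    rw [hA, Finset.mem_image]
    refine ⟨(v 0 + v 1, v 0 - v 1), ?_, ?_⟩
    · rw [Finset.mem_union, Finset.mem_product, Finset.mem_product]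
      rcases Int.even_or_odd (v 0 + v 1) with hev | hod
      · left
        obtain ⟨j, hj⟩ := hev
        constructor
        · rw [hEv, Finset.mem_image]
          exact ⟨j, by rw [Finset.mem_Icc]; omega, by omega⟩
        · rw [hEv, Finset.mem_image]
          exact ⟨j - v 1, by rw [Finset.mem_Icc]; omega, by omega⟩
      · right
        obtain ⟨j, hj⟩ := hod
        constructor
        · rw [hOd, Finset.mem_image]
          exact ⟨j, by rw [Finset.mem_Icc]; omega, by omega⟩
        · rw [hOd, Finset.mem_image]
          exact ⟨j - v 1, by rw [Finset.mem_Icc]; omega, by omega⟩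
    · funext i
      fin_cases i <;> simp [hψ] <;> omega
  -- cards
  have hEvcard : Ev.card = 2 * m + 1 := by
    rw [hEv, Finset.card_image_of_injective _ (fun a b h => by omega), Int.card_Icc]
    omega
  have hOdcard : Od.card = 2 * m := by
    rw [hOd, Finset.card_image_of_injective _ (fun a b h => by omega), Int.card_Icc]
    omega
  have hAcard : A.card ≤ (2 * m + 1) ^ 2 + (2 * m) ^ 2 := by
    calc A.card ≤ ((Ev ×ˢ Ev) ∪ (Od ×ˢ Od)).card := Finset.card_image_le
      _ ≤ (Ev ×ˢ Ev).card + (Od ×ˢ Od).card := Finset.card_union_le _ _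
      _ = (2 * m + 1) ^ 2 + (2 * m) ^ 2 := by
          rw [Finset.card_product, Finset.card_product, hEvcard, hOdcard]; ring
  -- tail
  set tail : Finset (Fin 2 → ℤ) := (Finset.Ioc (n₀ * b) N).image (fun i => pos s i) with htail
  have htailcard : tail.card ≤ r := by
    calc tail.card ≤ (Finset.Ioc (n₀ * b) N).card := Finset.card_image_le
      _ = N - n₀ * b := Nat.card_Ioc _ _
      _ = r := by omega
  -- the image is contained in A ∪ tail
  have hsub : (Finset.univ.image (fun i : Fin (N + 1) => pos s (i : ℕ))) ⊆ A ∪ tail := by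
    intro v hv
    rw [Finset.mem_image] at hv
    obtain ⟨i, -, hiv⟩ := hv
    have hiN : (i : ℕ) ≤ N := by omega
    rw [Finset.mem_union]
    rcases le_or_gt (i : ℕ) (n₀ * b) with hc | hc
    · left
      rw [← hiv, pos_eq_posN _ hiN]
      exact hmemA _ (hnorm _ hc)
    · right
      rw [htail, Finset.mem_image]
      exact ⟨(i : ℕ), by rw [Finset.mem_Ioc]; omega, hiv⟩
  -- conclude
  calc rangeRW s ≤ (A ∪ tail).card := Finset.card_le_card hsub
    _ ≤ A.card + tail.card := Finset.card_union_le _ _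
    _ ≤ ((2 * m + 1) ^ 2 + (2 * m) ^ 2) + r := by omega
    _ ≤ 16 * m ^ 2 + 2 * m := by
        have hmm : m ≤ m * m := Nat.le_mul_of_pos_left m hm1
        have expand : (2 * m + 1) ^ 2 + (2 * m) ^ 2 = 8 * (m * m) + 4 * m + 1 := by ring
        have hp : 16 * m ^ 2 = 16 * (m * m) := by ring
        omega

/-- Let `m = ⌊N^{1/3}⌋` and `K > 0` be a constant with
`P(walk of length 4M returns to 0) ≥ K M^{-3/2}` for all `M ≥ 1`. Then the
event that a walk of length `N` on `ℤ²` returns to the origin at all times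
`k·4m`, `1 ≤ k`, `k·4m ≤ N`, has probability at least
`(K m^{-3/2})^{N/(4m)}`, and on this event the range is at most
`16 m² + 2m`. -/
theorem periodic_return_event_bound (N : ℕ) (hN : 1 ≤ N)
    (m : ℕ) (hm : m = Nat.floor ((N : ℝ) ^ ((1 : ℝ) / 3)))
    (K : ℝ) (hK0 : 0 < K)
    (hK : ∀ M : ℕ, 1 ≤ M →
      (((Finset.univ.filter
          (fun s : Fin (4 * M) → Fin 2 × Bool => pos s (4 * M) = 0)).card : ℝ)
            / 4 ^ (4 * M)) ≥ K * (M : ℝ) ^ (-(3 / 2 : ℝ)))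
    (E : Finset (Fin N → Fin 2 × Bool))
    (hE : ∀ s : Fin N → Fin 2 × Bool,
      s ∈ E ↔ ∀ k : ℕ, 1 ≤ k → k * (4 * m) ≤ N → pos s (k * (4 * m)) = 0) :
    ((E.card : ℝ) / 4 ^ N
        ≥ (K * (m : ℝ) ^ (-(3 / 2 : ℝ))) ^ ((N : ℝ) / (4 * m))) ∧
      ∀ s ∈ E, rangeRW s ≤ 16 * m ^ 2 + 2 * m := by
  classical
  have hm1 : 1 ≤ m := by
    rw [hm]
    apply Nat.le_floor
    rw [Nat.cast_one]
    calc (1 : ℝ) = 1 ^ ((1 : ℝ) / 3) := (Real.one_rpow _).symm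
      _ ≤ (N : ℝ) ^ ((1 : ℝ) / 3) := by
          apply Real.rpow_le_rpow (by norm_num) (by exact_mod_cast hN) (by norm_num)
  have hb0 : 0 < 4 * m := by omega
  set n₀ := N / (4 * m) with hn₀
  set r := N % (4 * m) with hrdef
  have hrlt : r < 4 * m := Nat.mod_lt _ hb0
  have hNe : N = n₀ * (4 * m) + r := by
    rw [hn₀, hrdef, Nat.mul_comm (N / (4 * m)) (4 * m)]
    exact (Nat.div_add_mod N (4 * m)).symm
  constructor
  · -- probability bound
    rw [ge_iff_le]
    set A := (Finset.univ.filter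
      (fun t : Fin (4 * m) → Fin 2 × Bool => pos t (4 * m) = 0)).card with hAdef
    have hcard : A ^ n₀ * 4 ^ r ≤ E.card :=
      card_E_ge N (4 * m) n₀ r hb0 hrlt hNe E hE
    set c : ℝ := K * (m : ℝ) ^ (-(3 / 2 : ℝ)) with hc
    have hc0 : 0 < c := mul_pos hK0 (Real.rpow_pos_of_pos (by exact_mod_cast hm1) _)
    have hcA : c ≤ (A : ℝ) / 4 ^ (4 * m) := hK m hm1
    have hAle : A ≤ 4 ^ (4 * m) := by
      have h1 : A ≤ Fintype.card (Fin (4 * m) → Fin 2 × Bool) := by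
        rw [← Finset.card_univ]
        exact Finset.card_filter_le _ _
      have h2 : Fintype.card (Fin (4 * m) → Fin 2 × Bool) = 4 ^ (4 * m) := by
        rw [Fintype.card_fun]
        norm_num
      omega
    have hA1 : (A : ℝ) / 4 ^ (4 * m) ≤ 1 := by
      rw [div_le_one (by positivity)]
      exact_mod_cast hAle
    have hc1 : c ≤ 1 := hcA.trans hA1
    have hexp : (n₀ : ℝ) ≤ (N : ℝ) / (4 * (m : ℝ)) := by
      have := Nat.cast_div_le (α := ℝ) (m := N) (n := 4 * m)
      rw [hn₀]
      refine this.trans_eq ?_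
      push_cast
      ring_nf
    have h4N : (0 : ℝ) < 4 ^ N := by positivity
    calc c ^ ((N : ℝ) / (4 * (m : ℝ)))
        ≤ c ^ ((n₀ : ℝ)) := Real.rpow_le_rpow_of_exponent_ge hc0 hc1 hexp
      _ = c ^ n₀ := Real.rpow_natCast c n₀
      _ ≤ ((A : ℝ) / 4 ^ (4 * m)) ^ n₀ := pow_le_pow_left₀ hc0.le hcA n₀
      _ = ((A : ℝ) ^ n₀ * 4 ^ r) / 4 ^ N := by
          rw [div_pow, ← pow_mul]
          rw [show (4 : ℝ) ^ N = 4 ^ (4 * m * n₀) * 4 ^ r by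
            rw [← pow_add]; congr 1; rw [hNe]; ring]
          rw [mul_div_mul_right _ _ (by positivity : (4 : ℝ) ^ r ≠ 0)]
      _ ≤ (E.card : ℝ) / 4 ^ N := by
          gcongr
          exact_mod_cast hcard
  · -- range bound
    intro s hsE
    exact range_bound N m n₀ r hm1 hrlt hNe s ((hE s).1 hsE)
end

section
/- For simple random walks on Z^2, there exists a constant κ > 0 such that for all large N, γ_N ≥ 1 − κ (ln N)/N^{1/3}, where γ_N = ln W(N)/(N ln 4) and W(N) is the number of contact matrices of walks of length N. In particular γ_N → 1 as N → ∞. -/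
open Finset

lemma stepVec_injective (n : ℕ) : Function.Injective (stepVec n) := by
  rintro ⟨a, u⟩ ⟨b, v⟩ h
  have ha := congrFun h a
  simp only [stepVec, if_pos rfl] at ha
  by_cases hab : a = b
  · subst hab
    simp only [if_pos rfl] at ha
    cases u <;> cases v <;> simp_all
  · rw [if_neg hab] at ha
    cases u <;> simp at ha

lemma stepVec_abs_le (n : ℕ) (d : Fin n × Bool) (j : Fin n) : |stepVec n d j| ≤ 1 := by
  unfold stepVec
  split_ifs <;> simp

lemma pos_zero {n N : ℕ} (s : Fin N → Fin n × Bool) : pos s 0 = 0 := by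
  unfold pos
  rw [Finset.filter_false_of_mem, Finset.sum_empty]
  intro k _; omega

lemma pos_succ {n N : ℕ} (s : Fin N → Fin n × Bool) {i : ℕ} (hi : i < N) :
    pos s (i + 1) = pos s i + stepVec n (s ⟨i, hi⟩) := by
  unfold pos
  have : Finset.univ.filter (fun k : Fin N => (k : ℕ) < i + 1)
      = insert ⟨i, hi⟩ (Finset.univ.filter (fun k : Fin N => (k : ℕ) < i)) := by
    ext k
    simp [Fin.ext_iff, Nat.lt_succ_iff_lt_or_eq]
    omega
  rw [this, Finset.sum_insert (by simp)]
  ring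

/-- Steps extended by zero beyond time `N`. -/
def step' {n N : ℕ} (s : Fin N → Fin n × Bool) (k : ℕ) : Fin n → ℤ :=
  if h : k < N then stepVec n (s ⟨k, h⟩) else 0

lemma step'_eq {n N : ℕ} (s : Fin N → Fin n × Bool) {k : ℕ} (h : k < N) :
    step' s k = stepVec n (s ⟨k, h⟩) := dif_pos h

lemma pos_add {n N : ℕ} (s : Fin N → Fin n × Bool) (a t : ℕ) (h : a + t ≤ N) :
    pos s (a + t) = pos s a + ∑ o ∈ Finset.range t, step' s (a + o) := by
  induction t with
  | zero => simp
  | succ t ih =>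
    have h' : a + t ≤ N := by omega
    have heq : a + (t + 1) = (a + t) + 1 := by omega
    rw [heq, pos_succ s (show a + t < N by omega), ih h', Finset.sum_range_succ,
      step'_eq s (show a + t < N by omega)]
    rw [add_assoc]

/-- Times whose step leads to a never-before-visited site. -/
def freshTimes {n N : ℕ} (s : Fin N → Fin n × Bool) : Finset (Fin N) :=
  Finset.univ.filter (fun i : Fin N => ∀ j : ℕ, j ≤ (i : ℕ) → pos s ((i : ℕ) + 1) ≠ pos s j)

lemma freshTimes_card_le {n N : ℕ} (s : Fin N → Fin n × Bool) :
    (freshTimes s).card ≤ rangeRW s := by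
  classical
  apply Finset.card_le_card_of_injOn (fun i : Fin N => pos s ((i : ℕ) + 1))
  · intro i _
    exact Finset.mem_image.2 ⟨⟨(i : ℕ) + 1, by omega⟩, Finset.mem_univ _, rfl⟩
  · intro i hi i' hi' hpos
    simp only [freshTimes, Finset.coe_filter, Set.mem_setOf_eq] at hi hi'
    by_contra hne
    rcases lt_or_gt_of_ne (fun h : (i : ℕ) = (i' : ℕ) => hne (Fin.ext h)) with hlt | hlt
    · exact hi'.2 ((i : ℕ) + 1) (by omega) hpos.symm
    · exact hi.2 ((i' : ℕ) + 1) (by omega) hpos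

lemma cm_iff {n N : ℕ} {s1 s2 : Fin N → Fin n × Bool} (h : cm s1 = cm s2)
    {i j : ℕ} (hi : i ≤ N) (hj : j ≤ N) (hij : i ≠ j) :
    pos s1 i = pos s1 j ↔ pos s2 i = pos s2 j := by
  have := congrFun (congrFun h ⟨i, by omega⟩) ⟨j, by omega⟩
  simp only [cm, decide_eq_decide] at this
  simpa [hij] using this

lemma fiber_determined {n N : ℕ} (s s1 s2 : Fin N → Fin n × Bool)
    (h1 : cm s1 = cm s) (h2 : cm s2 = cm s)
    (hstep : ∀ i ∈ freshTimes s, s1 i = s2 i) : s1 = s2 := by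
  have hpos : ∀ i, i ≤ N → pos s1 i = pos s2 i := by
    intro i
    induction i using Nat.strong_induction_on with
    | _ i ih =>
      match i with
      | 0 => intro _; rw [pos_zero, pos_zero]
      | (i + 1) =>
        intro hi
        have hiN : i < N := hi
        by_cases hf : (⟨i, hiN⟩ : Fin N) ∈ freshTimes s
        · rw [pos_succ s1 hiN, pos_succ s2 hiN, ih i (by omega) (by omega),
            hstep _ hf]
        · simp only [freshTimes, Finset.mem_filter, Finset.mem_univ, true_and,
            not_forall] at hf
          obtain ⟨j, hj, hpj⟩ := hf
          rw [not_ne_iff] at hpj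
          have hij : i + 1 ≠ j := by omega
          have e1 : pos s1 (i + 1) = pos s1 j :=
            (cm_iff h1 hi (by omega) hij).2 hpj
          have e2 : pos s2 (i + 1) = pos s2 j :=
            (cm_iff h2 hi (by omega) hij).2 hpj
          rw [e1, e2, ih j (by omega) (by omega)]
  funext k
  apply stepVec_injective n
  have hk : (k : ℕ) < N := k.2
  have e1 := pos_succ s1 hk
  have e2 := pos_succ s2 hk
  have := (hpos ((k : ℕ) + 1) (by omega))
  rw [e1, e2, hpos (k : ℕ) (by omega)] at this
  have := add_left_cancel this
  simpa [Fin.eta] using this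

lemma degC_le {n N : ℕ} (hn : 0 < n) (s : Fin N → Fin n × Bool) :
    degC s ≤ (2 * n) ^ rangeRW s := by
  classical
  have key : degC s ≤ (2 * n) ^ (freshTimes s).card := by
    unfold degC
    have : (2 * n) ^ (freshTimes s).card
        = (Finset.univ : Finset (↥(freshTimes s) → Fin n × Bool)).card := by
      rw [Finset.card_univ, Fintype.card_fun]
      simp [mul_comm]
    rw [this]
    apply Finset.card_le_card_of_injOn
      (fun s' (i : ↥(freshTimes s)) => s' (i : Fin N))
    · intro _ _; exact Finset.mem_univ _
    · intro s1 h1 s2 h2 hfun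
      simp only [Finset.coe_filter, Set.mem_setOf_eq] at h1 h2
      exact fiber_determined s s1 s2 h1.2 h2.2
        (fun i hi => congrFun hfun ⟨i, hi⟩)
  exact key.trans (Nat.pow_le_pow_right (by omega) (freshTimes_card_le s))

def sgn (u : Bool) : ℤ := if u then 1 else -1

/-- Decode a pair of rotated-coordinate signs into a step of the 2D walk. -/
def decode (u v : Bool) : Fin 2 × Bool := if u = v then (0, u) else (1, u)

lemma decode_inj : ∀ u v u' v' : Bool, decode u v = decode u' v' → u = u' ∧ v = v' := by
  decide

lemma stepVec_decode_add (u v : Bool) :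
    stepVec 2 (decode u v) 0 + stepVec 2 (decode u v) 1 = sgn u := by
  revert u v; decide

lemma stepVec_decode_sub (u v : Bool) :
    stepVec 2 (decode u v) 0 - stepVec 2 (decode u v) 1 = sgn v := by
  revert u v; decide

lemma sum_sgn {B : ℕ} (T : Finset (Fin B)) :
    ∑ o : Fin B, sgn (decide (o ∈ T)) = 2 * (T.card : ℤ) - B := by
  classical
  have h1 : ∀ o : Fin B, sgn (decide (o ∈ T)) = 2 * (if o ∈ T then (1 : ℤ) else 0) - 1 := by
    intro o; by_cases h : o ∈ T <;> simp [sgn, h]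
  rw [Finset.sum_congr rfl (fun o _ => h1 o), Finset.sum_sub_distrib, ← Finset.mul_sum]
  simp [Finset.sum_ite_mem, Finset.card_univ]

lemma blockSum {L : ℕ} (T1 T2 : Finset (Fin (4 * L)))
    (h1 : T1.card = 2 * L) (h2 : T2.card = 2 * L) :
    ∑ o : Fin (4 * L), stepVec 2 (decode (decide (o ∈ T1)) (decide (o ∈ T2))) = 0 := by
  classical
  set f := fun o : Fin (4 * L) => stepVec 2 (decode (decide (o ∈ T1)) (decide (o ∈ T2))) with hf
  have hadd : (∑ o, f o 0) + (∑ o, f o 1) = 0 := by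
    rw [← Finset.sum_add_distrib]
    have : ∀ o : Fin (4 * L), f o 0 + f o 1 = sgn (decide (o ∈ T1)) := fun o => stepVec_decode_add _ _
    rw [Finset.sum_congr rfl (fun o _ => this o), sum_sgn T1, h1]
    push_cast; ring
  have hsub : (∑ o, f o 0) - (∑ o, f o 1) = 0 := by
    rw [← Finset.sum_sub_distrib]
    have : ∀ o : Fin (4 * L), f o 0 - f o 1 = sgn (decide (o ∈ T2)) := fun o => stepVec_decode_sub _ _
    rw [Finset.sum_congr rfl (fun o _ => this o), sum_sgn T2, h2]
    push_cast; ring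
  have hA : (∑ o, f o 0) = 0 := by omega
  have hB : (∑ o, f o 1) = 0 := by omega
  funext j
  rw [Finset.sum_apply, Pi.zero_apply]
  fin_cases j
  · exact hA
  · exact hB

abbrev Bal (L : ℕ) := {T : Finset (Fin (4 * L)) // T.card = 2 * L}

abbrev Dom (L m rem : ℕ) :=
  (Fin m → Bal L) × (Fin m → Bal L) × (Fin rem → Fin 2 × Bool)

lemma card_Dom (L m rem : ℕ) :
    Fintype.card (Dom L m rem) = (Nat.choose (4 * L) (2 * L)) ^ (2 * m) * 4 ^ rem := by
  rw [Fintype.card_prod, Fintype.card_prod, Fintype.card_fun, Fintype.card_fun]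
  simp only [Fintype.card_finset_len, Fintype.card_fin, Fintype.card_prod, Fintype.card_bool]
  ring

/-- Extend a block datum to all of `ℕ`. -/
def extF {L m : ℕ} (f : Fin m → Bal L) (b : ℕ) : Finset ℕ :=
  if h : b < m then ((f ⟨b, h⟩).1.image Fin.val) else ∅

lemma mem_extF {L m : ℕ} (f : Fin m → Bal L) (b : Fin m) (o : Fin (4 * L)) :
    (o : ℕ) ∈ extF f (b : ℕ) ↔ o ∈ (f b).1 := by
  simp [extF, b.2, Fin.val_injective.eq_iff]

/-- The concatenation of `m` balanced blocks of length `4L` plus a free remainder. -/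
def Psi (L m rem N : ℕ) (hN : N = 4 * L * m + rem) (d : Dom L m rem) :
    Fin N → Fin 2 × Bool := fun k =>
  if h : (k : ℕ) < 4 * L * m then
    decode (decide ((k : ℕ) % (4 * L) ∈ extF d.1 ((k : ℕ) / (4 * L))))
           (decide ((k : ℕ) % (4 * L) ∈ extF d.2.1 ((k : ℕ) / (4 * L))))
  else d.2.2 ⟨(k : ℕ) - 4 * L * m, by have := k.2; omega⟩

lemma block_lt {L m : ℕ} (b : Fin m) (o : Fin (4 * L)) :
    4 * L * (b : ℕ) + (o : ℕ) < 4 * L * m := by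
  have h1 : (o : ℕ) < 4 * L := o.2
  have h2 : (b : ℕ) + 1 ≤ m := b.2
  have h3 : 4 * L * ((b : ℕ) + 1) ≤ 4 * L * m := Nat.mul_le_mul_left _ h2
  have h4 : 4 * L * ((b : ℕ) + 1) = 4 * L * (b : ℕ) + 4 * L := by ring
  omega

lemma Psi_block {L m rem N : ℕ} (hN : N = 4 * L * m + rem) (d : Dom L m rem)
    (b : Fin m) (o : Fin (4 * L)) (hk : 4 * L * (b : ℕ) + (o : ℕ) < N) :
    Psi L m rem N hN d ⟨4 * L * (b : ℕ) + (o : ℕ), hk⟩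
      = decode (decide (o ∈ (d.1 b).1)) (decide (o ∈ (d.2.1 b).1)) := by
  have hL : 0 < 4 * L := by have := o.2; omega
  have hdiv : (4 * L * (b : ℕ) + (o : ℕ)) / (4 * L) = (b : ℕ) := by
    rw [Nat.mul_add_div hL, Nat.div_eq_of_lt o.2, add_zero]
  have hmod : (4 * L * (b : ℕ) + (o : ℕ)) % (4 * L) = (o : ℕ) := by
    rw [Nat.mul_add_mod, Nat.mod_eq_of_lt o.2]
  rw [Psi, dif_pos (block_lt b o)]
  simp only [hdiv, hmod]
  rw [decide_eq_decide.2 (mem_extF d.1 b o), decide_eq_decide.2 (mem_extF d.2.1 b o)]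

lemma Psi_rem {L m rem N : ℕ} (hN : N = 4 * L * m + rem) (d : Dom L m rem)
    (t : Fin rem) (hk : 4 * L * m + (t : ℕ) < N) :
    Psi L m rem N hN d ⟨4 * L * m + (t : ℕ), hk⟩ = d.2.2 t := by
  rw [Psi, dif_neg (show ¬(4 * L * m + (t : ℕ) < 4 * L * m) by omega)]
  exact congrArg d.2.2 (Fin.ext (by simp))

lemma Psi_injective (L m rem N : ℕ) (hN : N = 4 * L * m + rem) :
    Function.Injective (Psi L m rem N hN) := by
  intro d d' h
  have hblock : ∀ (b : Fin m) (o : Fin (4 * L)),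
      (o ∈ (d.1 b).1 ↔ o ∈ (d'.1 b).1) ∧ (o ∈ (d.2.1 b).1 ↔ o ∈ (d'.2.1 b).1) := by
    intro b o
    have hk : 4 * L * (b : ℕ) + (o : ℕ) < N := by
      have := block_lt b o; omega
    have := congrFun h ⟨4 * L * (b : ℕ) + (o : ℕ), hk⟩
    rw [Psi_block hN d b o hk, Psi_block hN d' b o hk] at this
    obtain ⟨h1, h2⟩ := decode_inj _ _ _ _ this
    exact ⟨decide_eq_decide.1 h1, decide_eq_decide.1 h2⟩
  have hrem : d.2.2 = d'.2.2 := by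
    funext t
    have hk : 4 * L * m + (t : ℕ) < N := by have := t.2; omega
    have := congrFun h ⟨4 * L * m + (t : ℕ), hk⟩
    rwa [Psi_rem hN d t hk, Psi_rem hN d' t hk] at this
  have h1 : d.1 = d'.1 := by
    funext b; apply Subtype.ext; apply Finset.ext; intro o; exact (hblock b o).1
  have h2 : d.2.1 = d'.2.1 := by
    funext b; apply Subtype.ext; apply Finset.ext; intro o; exact (hblock b o).2
  exact Prod.ext h1 (Prod.ext h2 hrem)

lemma Psi_val {L m rem N : ℕ} (hN : N = 4 * L * m + rem) (d : Dom L m rem)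
    (k : ℕ) (hkN : k < N) (hk : k < 4 * L * m) :
    Psi L m rem N hN d ⟨k, hkN⟩
      = decode (decide (k % (4 * L) ∈ extF d.1 (k / (4 * L))))
               (decide (k % (4 * L) ∈ extF d.2.1 (k / (4 * L)))) := by
  rw [Psi, dif_pos hk]

lemma blockSum' {L m : ℕ} (f1 f2 : Fin m → Bal L) (b : Fin m) :
    ∑ o ∈ Finset.range (4 * L),
      stepVec 2 (decode (decide (o ∈ extF f1 (b : ℕ))) (decide (o ∈ extF f2 (b : ℕ)))) = 0 := by
  rw [← Fin.sum_univ_eq_sum_range (fun o =>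
    stepVec 2 (decode (decide (o ∈ extF f1 (b : ℕ))) (decide (o ∈ extF f2 (b : ℕ))))) (4 * L)]
  have hcong : ∀ o : Fin (4 * L),
      stepVec 2 (decode (decide ((o : ℕ) ∈ extF f1 (b : ℕ))) (decide ((o : ℕ) ∈ extF f2 (b : ℕ))))
        = stepVec 2 (decode (decide (o ∈ (f1 b).1)) (decide (o ∈ (f2 b).1))) := by
    intro o
    rw [decide_eq_decide.2 (mem_extF f1 b o), decide_eq_decide.2 (mem_extF f2 b o)]
  rw [Finset.sum_congr rfl (fun o _ => hcong o)]
  exact blockSum (f1 b).1 (f2 b).1 (f1 b).2 (f2 b).2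

lemma Psi_pos_block {L m rem N : ℕ} (hN : N = 4 * L * m + rem) (d : Dom L m rem)
    (b : ℕ) (hb : b ≤ m) : pos (Psi L m rem N hN d) (4 * L * b) = 0 := by
  induction b with
  | zero => simpa using pos_zero (Psi L m rem N hN d)
  | succ b ih =>
    have hbm : b < m := hb
    have hmul : 4 * L * (b + 1) = 4 * L * b + 4 * L := by ring
    have hmul2 : 4 * L * (b + 1) ≤ 4 * L * m := Nat.mul_le_mul_left _ hb
    have hle : 4 * L * b + 4 * L ≤ N := by omega
    rw [hmul, pos_add (Psi L m rem N hN d) (4 * L * b) (4 * L) hle, ih (by omega), zero_add]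
    have hL : 0 < 4 * L ∨ 4 * L = 0 := by omega
    rcases hL with hL | hL
    · have hstep : ∀ o ∈ Finset.range (4 * L),
          step' (Psi L m rem N hN d) (4 * L * b + o)
            = stepVec 2 (decode (decide (o ∈ extF d.1 b)) (decide (o ∈ extF d.2.1 b))) := by
        intro o ho
        have ho' : o < 4 * L := Finset.mem_range.1 ho
        have hkN : 4 * L * b + o < N := by omega
        have hk4 : 4 * L * b + o < 4 * L * m := by
          have : 4 * L * b + o < 4 * L * (b + 1) := by omega
          omega
        rw [step'_eq _ hkN, Psi_val hN d _ hkN hk4]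
        have hdiv : (4 * L * b + o) / (4 * L) = b := by
          rw [Nat.mul_add_div hL, Nat.div_eq_of_lt ho', add_zero]
        have hmod : (4 * L * b + o) % (4 * L) = o := by
          rw [Nat.mul_add_mod, Nat.mod_eq_of_lt ho']
        rw [hdiv, hmod]
      rw [Finset.sum_congr rfl hstep]
      exact blockSum' d.1 d.2.1 ⟨b, hbm⟩
    · rw [hL]
      simp

lemma step'_abs_le {n N : ℕ} (s : Fin N → Fin n × Bool) (k : ℕ) (j : Fin n) :
    |step' s k j| ≤ 1 := by
  unfold step'
  split
  · exact stepVec_abs_le n _ j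
  · simp

lemma Psi_pos_bound {L m rem N : ℕ} (hL : 0 < L) (hrem : rem < 4 * L)
    (hN : N = 4 * L * m + rem) (d : Dom L m rem) (i : ℕ) (hi : i ≤ N) (j : Fin 2) :
    |pos (Psi L m rem N hN d) i j| ≤ 4 * L := by
  have h4L : 0 < 4 * L := by omega
  have hb0 : i / (4 * L) ≤ m := by
    have h1 : i < 4 * L * (m + 1) := by
      have h2 : 4 * L * (m + 1) = 4 * L * m + 4 * L := by ring
      omega
    have := Nat.div_lt_of_lt_mul h1
    omega
  have hdm : 4 * L * (i / (4 * L)) + i % (4 * L) = i := Nat.div_add_mod i (4 * L)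
  have hmlt : i % (4 * L) < 4 * L := Nat.mod_lt _ h4L
  have hpos := pos_add (Psi L m rem N hN d) (4 * L * (i / (4 * L))) (i % (4 * L)) (by omega)
  rw [hdm] at hpos
  rw [hpos, Psi_pos_block hN d _ hb0, zero_add]
  rw [Finset.sum_apply]
  calc |∑ o ∈ Finset.range (i % (4 * L)), step' (Psi L m rem N hN d) (4 * L * (i / (4 * L)) + o) j|
      ≤ ∑ o ∈ Finset.range (i % (4 * L)), |step' (Psi L m rem N hN d) (4 * L * (i / (4 * L)) + o) j| :=
        Finset.abs_sum_le_sum_abs _ _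
    _ ≤ ∑ _o ∈ Finset.range (i % (4 * L)), 1 :=
        Finset.sum_le_sum (fun o _ => step'_abs_le _ _ _)
    _ = (i % (4 * L) : ℤ) := by simp
    _ ≤ 4 * L := by exact_mod_cast hmlt.le

lemma rangeRW_Psi_le {L m rem N : ℕ} (hL : 0 < L) (hrem : rem < 4 * L)
    (hN : N = 4 * L * m + rem) (d : Dom L m rem) :
    rangeRW (Psi L m rem N hN d) ≤ (8 * L + 1) ^ 2 := by
  classical
  have hsub : (Finset.univ.image (fun i : Fin (N + 1) => pos (Psi L m rem N hN d) (i : ℕ)))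
      ⊆ Finset.Icc (fun _ : Fin 2 => -(4 * L : ℤ)) (fun _ : Fin 2 => (4 * L : ℤ)) := by
    intro p hp
    obtain ⟨i, _, rfl⟩ := Finset.mem_image.1 hp
    rw [Finset.mem_Icc]
    constructor <;> (intro j; have := Psi_pos_bound hL hrem hN d (i : ℕ) (by omega) j)
    · have := (abs_le.1 this).1; simpa using this
    · have := (abs_le.1 this).2; simpa using this
  refine (Finset.card_le_card hsub).trans ?_
  rw [Pi.card_Icc]
  simp only [Int.card_Icc]
  rw [Finset.prod_const, Finset.card_univ, Fintype.card_fin]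
  apply Nat.pow_le_pow_left
  omega

lemma count_bound (L m rem N : ℕ) (hL : 0 < L) (hrem : rem < 4 * L)
    (hN : N = 4 * L * m + rem) :
    (Nat.choose (4 * L) (2 * L)) ^ (2 * m) * 4 ^ rem ≤ W 2 N * 4 ^ ((8 * L + 1) ^ 2) := by
  classical
  set G := (Finset.univ : Finset (Dom L m rem)).image (Psi L m rem N hN) with hG
  have hGcard : G.card = (Nat.choose (4 * L) (2 * L)) ^ (2 * m) * 4 ^ rem := by
    rw [hG, Finset.card_image_of_injective _ (Psi_injective L m rem N hN),
      Finset.card_univ, card_Dom]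
  have hfiber : ∀ C ∈ G.image cm,
      (G.filter (fun s => cm s = C)).card ≤ 4 ^ ((8 * L + 1) ^ 2) := by
    intro C hC
    obtain ⟨s0, hs0G, hs0⟩ := Finset.mem_image.1 hC
    have h1 : (G.filter (fun s => cm s = C)).card ≤ degC s0 := by
      apply Finset.card_le_card
      intro x hx
      rw [Finset.mem_filter] at hx
      simp only [degC, Finset.mem_filter, Finset.mem_univ, true_and]
      rw [hs0]; exact hx.2
    refine h1.trans ?_
    obtain ⟨dd, _, hdd⟩ := Finset.mem_image.1 hs0G
    calc degC s0 ≤ (2 * 2) ^ rangeRW s0 := degC_le (by norm_num) s0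
      _ ≤ 4 ^ ((8 * L + 1) ^ 2) := by
          rw [show (2 * 2 : ℕ) = 4 from rfl]
          apply Nat.pow_le_pow_right (by norm_num)
          rw [← hdd]
          exact rangeRW_Psi_le hL hrem hN dd
  have hmain := Finset.card_le_mul_card_image G (4 ^ ((8 * L + 1) ^ 2)) hfiber
  have himg : (G.image cm).card ≤ W 2 N :=
    Finset.card_le_card (Finset.image_subset_image (Finset.subset_univ G))
  calc (Nat.choose (4 * L) (2 * L)) ^ (2 * m) * 4 ^ rem = G.card := hGcard.symm
    _ ≤ 4 ^ ((8 * L + 1) ^ 2) * (G.image cm).card := hmain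
    _ ≤ 4 ^ ((8 * L + 1) ^ 2) * W 2 N := Nat.mul_le_mul_left _ himg
    _ = W 2 N * 4 ^ ((8 * L + 1) ^ 2) := mul_comm _ _

lemma W_pos (N : ℕ) : 0 < W 2 N := by
  rw [W, Finset.card_pos]
  exact Finset.Nonempty.image ⟨fun _ => (0, true), Finset.mem_univ _⟩ _

lemma W_le (N : ℕ) : W 2 N ≤ 4 ^ N := by
  refine (Finset.card_image_le).trans ?_
  rw [Finset.card_univ, Fintype.card_fun]
  simp

lemma W_ge (N L : ℕ) (hL : 2 ≤ L) :
    4 ^ N ≤ W 2 N * 4 ^ ((8 * L + 1) ^ 2) * (2 * L) ^ (2 * (N / (4 * L))) := by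
  have h4L : 0 < 4 * L := by omega
  have hmr : 4 * L * (N / (4 * L)) + N % (4 * L) = N := Nat.div_add_mod N (4 * L)
  have hcb : 4 ^ (2 * L) ≤ 2 * L * Nat.choose (4 * L) (2 * L) := by
    have h := Nat.four_pow_lt_mul_centralBinom (2 * L) (by omega)
    rw [Nat.centralBinom, show 2 * (2 * L) = 4 * L by ring] at h
    omega
  calc 4 ^ N = (4 ^ (2 * L)) ^ (2 * (N / (4 * L))) * 4 ^ (N % (4 * L)) := by
        rw [← pow_mul, ← pow_add]
        congr 1
        have : 2 * L * (2 * (N / (4 * L))) = 4 * L * (N / (4 * L)) := by ring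
        omega
    _ ≤ (2 * L * Nat.choose (4 * L) (2 * L)) ^ (2 * (N / (4 * L))) * 4 ^ (N % (4 * L)) :=
        Nat.mul_le_mul_right _ (Nat.pow_le_pow_left hcb _)
    _ = (2 * L) ^ (2 * (N / (4 * L)))
          * ((Nat.choose (4 * L) (2 * L)) ^ (2 * (N / (4 * L))) * 4 ^ (N % (4 * L))) := by
        rw [mul_pow]; ring
    _ ≤ (2 * L) ^ (2 * (N / (4 * L))) * (W 2 N * 4 ^ ((8 * L + 1) ^ 2)) :=
        Nat.mul_le_mul_left _
          (count_bound L (N / (4 * L)) (N % (4 * L)) N (by omega) (Nat.mod_lt _ h4L) hmr.symm)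
    _ = W 2 N * 4 ^ ((8 * L + 1) ^ 2) * (2 * L) ^ (2 * (N / (4 * L))) := by ring

lemma logW_ge (N : ℕ) (hN : 27 ≤ N) :
    (N : ℝ) * Real.log 4 - 82 * ((N : ℝ) ^ ((1 : ℝ) / 3)) ^ 2 * Real.log N
      ≤ Real.log (W 2 N) := by
  have hN0 : (0 : ℝ) < N := by positivity
  set x : ℝ := (N : ℝ) ^ ((1 : ℝ) / 3) with hxdef
  have hx0 : 0 < x := Real.rpow_pos_of_pos hN0 _
  have hx3 : x ^ 3 = (N : ℝ) := by
    rw [hxdef, ← Real.rpow_natCast ((N : ℝ) ^ ((1 : ℝ) / 3)) 3, ← Real.rpow_mul hN0.le]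
    norm_num
  have hx_ge3 : 3 ≤ x := by
    have h27 : ((27 : ℝ)) ^ ((1 : ℝ) / 3) = 3 := by
      rw [show (27 : ℝ) = 3 ^ (3 : ℝ) by
        rw [show (3:ℝ)^(3:ℝ) = (3:ℝ)^(3:ℕ) from Real.rpow_natCast 3 3]; norm_num]
      rw [← Real.rpow_mul (by norm_num)]
      norm_num
    calc (3 : ℝ) = (27 : ℝ) ^ ((1 : ℝ) / 3) := h27.symm
      _ ≤ x := Real.rpow_le_rpow (by norm_num) (by exact_mod_cast hN) (by norm_num)
  set L : ℕ := ⌊x⌋₊ with hLdef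
  have hLx : (L : ℝ) ≤ x := Nat.floor_le hx0.le
  have hxL1 : x ≤ (L : ℝ) + 1 := (Nat.lt_floor_add_one x).le
  have hL3 : 3 ≤ L := Nat.le_floor (by exact_mod_cast hx_ge3)
  have hL3r : (3 : ℝ) ≤ (L : ℝ) := by exact_mod_cast hL3
  set m : ℕ := N / (4 * L) with hmdef
  -- cast the counting inequality
  have hcast : (4 : ℝ) ^ N ≤ (W 2 N : ℝ) * 4 ^ ((8 * L + 1) ^ 2) * (2 * L : ℝ) ^ (2 * m) := by
    have := W_ge N L (by omega)
    exact_mod_cast this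
  have hW0 : (0 : ℝ) < (W 2 N : ℝ) := by exact_mod_cast W_pos N
  have hlog : (N : ℝ) * Real.log 4
      ≤ Real.log (W 2 N) + ((8 * L + 1) ^ 2 : ℕ) * Real.log 4
        + (2 * m : ℕ) * Real.log (2 * L : ℝ) := by
    have h1 : Real.log ((4 : ℝ) ^ N)
        ≤ Real.log ((W 2 N : ℝ) * 4 ^ ((8 * L + 1) ^ 2) * (2 * L : ℝ) ^ (2 * m)) :=
      Real.log_le_log (by positivity) hcast
    rw [Real.log_pow, Real.log_mul (by positivity) (by positivity),
      Real.log_mul (by positivity) (by positivity), Real.log_pow, Real.log_pow] at h1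
    push_cast at h1 ⊢
    linarith
  -- bounds
  have hlogN0 : (0 : ℝ) ≤ Real.log N := Real.log_nonneg (by exact_mod_cast (show 1 ≤ N by omega))
  have hlog4 : (0 : ℝ) < Real.log 4 := Real.log_pos (by norm_num)
  have hA : (((8 * L + 1) ^ 2 : ℕ) : ℝ) ≤ 81 * x ^ 2 := by
    push_cast
    nlinarith [hLx, hL3r, hx0]
  have hx2L : x ≤ 2 * (L : ℝ) := by linarith
  have hB : ((2 * m : ℕ) : ℝ) ≤ x ^ 2 := by
    push_cast
    have h1 : ((m : ℕ) : ℝ) ≤ (N : ℝ) / (4 * L) := by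
      rw [hmdef]
      exact_mod_cast Nat.cast_div_le
    have h2 : (N : ℝ) / (4 * L) ≤ x ^ 2 / 2 := by
      rw [div_le_div_iff₀ (by positivity) (by norm_num)]
      nlinarith [hx3, hx2L, hx0, sq_nonneg x]
    linarith
  have hC : Real.log (2 * (L : ℝ)) ≤ Real.log N := by
    apply Real.log_le_log (by positivity)
    nlinarith [hx3, hLx, hx_ge3]
  have hD : Real.log 4 ≤ Real.log N := by
    apply Real.log_le_log (by norm_num)
    exact_mod_cast (show 4 ≤ N by omega)
  have hlog2L0 : (0 : ℝ) ≤ Real.log (2 * (L : ℝ)) :=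
    Real.log_nonneg (by linarith)
  have t1 : (((8 * L + 1) ^ 2 : ℕ) : ℝ) * Real.log 4 ≤ 81 * x ^ 2 * Real.log N :=
    mul_le_mul hA hD hlog4.le (by positivity)
  have t2 : ((2 * m : ℕ) : ℝ) * Real.log (2 * (L : ℝ)) ≤ x ^ 2 * Real.log N :=
    mul_le_mul hB hC hlog2L0 (by positivity)
  have hcast2L : ((2 * L : ℕ) : ℝ) = 2 * (L : ℝ) := by push_cast; ring
  rw [show Real.log ((2 : ℝ) * (L : ℕ)) = Real.log (2 * (L : ℝ)) by norm_num] at hlog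
  linarith [hlog, t1, t2]

lemma log_two_two : Real.log (2 * ((2 : ℕ) : ℝ)) = Real.log 4 := by norm_num

lemma gamma_le_one (N : ℕ) (hN : 1 ≤ N) : gammaRW 2 N ≤ 1 := by
  rw [gammaRW]
  rw [show ((2 : ℝ) * ((2 : ℕ) : ℝ)) = 4 by norm_num]
  have hden : 0 < (N : ℝ) * Real.log 4 := by
    apply mul_pos (by exact_mod_cast hN) (Real.log_pos (by norm_num))
  rw [div_le_one hden]
  calc Real.log (W 2 N) ≤ Real.log ((4 : ℝ) ^ N) := by
        apply Real.log_le_log (by exact_mod_cast W_pos N)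
        exact_mod_cast W_le N
    _ = (N : ℝ) * Real.log 4 := by rw [Real.log_pow]
  
lemma gamma_ge (N : ℕ) (hN : 27 ≤ N) :
    1 - 100 * Real.log N / (N : ℝ) ^ ((1 : ℝ) / 3) ≤ gammaRW 2 N := by
  have hN0 : (0 : ℝ) < N := by positivity
  set x : ℝ := (N : ℝ) ^ ((1 : ℝ) / 3) with hxdef
  have hx0 : 0 < x := Real.rpow_pos_of_pos hN0 _
  have hx3 : x ^ 3 = (N : ℝ) := by
    rw [hxdef, ← Real.rpow_natCast ((N : ℝ) ^ ((1 : ℝ) / 3)) 3, ← Real.rpow_mul hN0.le]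
    norm_num
  have hlogN0 : (0 : ℝ) ≤ Real.log N := Real.log_nonneg (by exact_mod_cast (show 1 ≤ N by omega))
  have hlog4gt1 : (1 : ℝ) < Real.log 4 := by
    rw [Real.lt_log_iff_exp_lt (by norm_num)]
    exact Real.exp_one_lt_d9.trans (by norm_num)
  have hden : 0 < (N : ℝ) * Real.log 4 := mul_pos hN0 (by linarith)
  rw [gammaRW, show ((2 : ℝ) * ((2 : ℕ) : ℝ)) = 4 by norm_num]
  rw [le_div_iff₀ hden]
  have hexp : (1 - 100 * Real.log N / x) * ((N : ℝ) * Real.log 4)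
      = (N : ℝ) * Real.log 4 - 100 * Real.log N * x ^ 2 * Real.log 4 := by
    rw [← hx3]
    field_simp
  rw [hexp]
  have key := logW_ge N hN
  rw [← hxdef] at key
  have h0 : 0 ≤ (100 * Real.log 4 - 82) * (x ^ 2 * Real.log N) :=
    mul_nonneg (by linarith) (mul_nonneg (sq_nonneg x) hlogN0)
  nlinarith [key, h0]


open Filter in
/-- For SRW on `ℤ²` there is a constant `κ > 0` such that for all large `N`,
`γ_N ≥ 1 - κ ln N / N^{1/3}`; in particular `γ_N → 1`. -/
theorem gammaRW_two_lower_bound :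
    ∃ κ : ℝ, 0 < κ ∧
      (∀ᶠ N : ℕ in atTop,
        gammaRW 2 N ≥ 1 - κ * Real.log N / (N : ℝ) ^ ((1 : ℝ) / 3)) ∧
      Tendsto (fun N => gammaRW 2 N) atTop (nhds 1) := by
  refine ⟨100, by norm_num, ?_, ?_⟩
  · filter_upwards [eventually_ge_atTop 27] with N hN
    exact gamma_ge N hN
  · have hlimaux : Tendsto (fun N : ℕ => Real.log N / (N : ℝ) ^ ((1 : ℝ) / 3)) atTop (nhds 0) := by
      have h := (isLittleO_log_rpow_atTop (by norm_num : (0 : ℝ) < 1 / 3)).tendsto_div_nhds_zero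
      exact h.comp tendsto_natCast_atTop_atTop
    have hlow : Tendsto (fun N : ℕ => 1 - 100 * Real.log N / (N : ℝ) ^ ((1 : ℝ) / 3))
        atTop (nhds 1) := by
      have h2 := (hlimaux.const_mul (100 : ℝ)).const_sub (1 : ℝ)
      simp only [mul_zero, sub_zero] at h2
      simpa [mul_div_assoc] using h2
    apply tendsto_of_tendsto_of_tendsto_of_le_of_le' hlow tendsto_const_nhds
    · filter_upwards [eventually_ge_atTop 27] with N hN
      exact gamma_ge N hN
    · filter_upwards [eventually_ge_atTop 1] with N hN
      exact gamma_le_one N hN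
end

section
/- For simple random walks on Z^3 of length N, suppose the number P_N of occurrences of a fixed pattern P in the support of the walk satisfies E(P_N) = m₁N + O(√N) with m₁ > 0 and Var(P_N) = O(N ln N), and each occurrence yields an independent contact-matrix-preserving modification so that deg C(ω) ≥ 2^{P_N(ω)}. Then for every ν < m₁ ln 2, P(deg C(ω) ≥ e^{νN}) → 1 as N → ∞, and consequently limsup_{N→∞} δ_N ≤ 1 − (m₁ ln 2)/(2 ln 6) < 1. -/
open Finset

-- auxiliary lemmas
lemma card_univ_walks (N : ℕ) :
    (Finset.univ : Finset (Fin N → Fin 3 × Bool)).card = 6 ^ N := by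
  simp [Finset.card_univ]

lemma one_le_degC {n N : ℕ} (s : Fin N → Fin n × Bool) : 1 ≤ degC s := by
  have : s ∈ Finset.univ.filter (fun s' : Fin N → Fin n × Bool => cm s' = cm s) := by
    simp
  exact Finset.card_pos.mpr ⟨s, this⟩

lemma negMulLog_div_pow (m N : ℕ) :
    Real.negMulLog ((m : ℝ) / 6 ^ N)
      = ((m : ℝ) * ((N : ℝ) * Real.log 6) - (m : ℝ) * Real.log m) / 6 ^ N := by
  rcases Nat.eq_zero_or_pos m with rfl | hm
  · simp
  · have h6 : (0:ℝ) < 6 ^ N := by positivity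
    have hm' : (0:ℝ) < m := by exact_mod_cast hm
    rw [Real.negMulLog, Real.log_div (ne_of_gt hm') (ne_of_gt h6), Real.log_pow]
    field_simp
    ring

lemma SC_eq_log_sum (N : ℕ) :
    SC 3 N = (N : ℝ) * Real.log 6 -
      (∑ s : Fin N → Fin 3 × Bool, Real.log (degC s)) / 6 ^ N := by
  have h6 : (0:ℝ) < 6 ^ N := by positivity
  have hbase : ((2 * (3:ℕ) : ℕ) : ℝ) = 6 := by norm_num
  have hSC : SC 3 N = ∑ C : Fin (N + 1) → Fin (N + 1) → Bool,
      Real.negMulLog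
        (((Finset.univ.filter (fun s : Fin N → Fin 3 × Bool => cm s = C)).card : ℝ) / 6 ^ N) := by
    unfold SC
    norm_num
  rw [hSC]
  have hterm : ∀ C : Fin (N + 1) → Fin (N + 1) → Bool,
      Real.negMulLog
        (((Finset.univ.filter (fun s : Fin N → Fin 3 × Bool => cm s = C)).card : ℝ) / 6 ^ N)
      = ((((Finset.univ.filter (fun s : Fin N → Fin 3 × Bool => cm s = C)).card : ℝ))
            * ((N : ℝ) * Real.log 6)
          - (((Finset.univ.filter (fun s : Fin N → Fin 3 × Bool => cm s = C)).card : ℝ))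
            * Real.log ((Finset.univ.filter (fun s : Fin N → Fin 3 × Bool => cm s = C)).card))
          / 6 ^ N := fun C => negMulLog_div_pow _ N
  simp_rw [hterm]
  rw [← Finset.sum_div, Finset.sum_sub_distrib]
  have hcard : ∑ C : Fin (N + 1) → Fin (N + 1) → Bool,
      (((Finset.univ.filter (fun s : Fin N → Fin 3 × Bool => cm s = C)).card : ℝ)) = 6 ^ N := by
    have := Finset.card_eq_sum_card_fiberwise
      (f := fun s : Fin N → Fin 3 × Bool => cm s)
      (s := Finset.univ) (t := Finset.univ) (fun s _ => Finset.mem_univ _)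
    rw [card_univ_walks] at this
    exact_mod_cast congrArg (fun k : ℕ => (k : ℝ)) this.symm
  have hlog : ∑ C : Fin (N + 1) → Fin (N + 1) → Bool,
      (((Finset.univ.filter (fun s : Fin N → Fin 3 × Bool => cm s = C)).card : ℝ))
        * Real.log ((Finset.univ.filter (fun s : Fin N → Fin 3 × Bool => cm s = C)).card)
      = ∑ s : Fin N → Fin 3 × Bool, Real.log (degC s) := by
    rw [← Finset.sum_fiberwise Finset.univ (fun s : Fin N → Fin 3 × Bool => cm s)
      (fun s => Real.log (degC s))]
    refine Finset.sum_congr rfl fun C _ => ?_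
    have : ∀ s ∈ Finset.univ.filter (fun s : Fin N → Fin 3 × Bool => cm s = C),
        Real.log (degC s)
          = Real.log ((Finset.univ.filter (fun s : Fin N → Fin 3 × Bool => cm s = C)).card) := by
      intro s hs
      have hcm : cm s = C := (Finset.mem_filter.mp hs).2
      unfold degC
      rw [hcm]
    rw [Finset.sum_congr rfl this, Finset.sum_const, nsmul_eq_mul]
  rw [← Finset.sum_mul, hcard, hlog, sub_div, mul_div_assoc]
  rw [mul_div_cancel₀ _ (ne_of_gt h6)]

lemma deltaRW_le_one_sub (N : ℕ) (hN : 0 < N) (ν : ℝ) (hν : 0 ≤ ν) :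
    deltaRW 3 N ≤ 1 - ν / Real.log 6 *
      (((Finset.univ.filter (fun s : Fin N → Fin 3 × Bool =>
          Real.exp (ν * N) ≤ (degC s : ℝ))).card : ℝ) / 6 ^ N) := by
  have hlog6 : 0 < Real.log 6 := Real.log_pos (by norm_num)
  have h6 : (0:ℝ) < 6 ^ N := by positivity
  have hN' : (0:ℝ) < N := by exact_mod_cast hN
  have hNlog : 0 < (N:ℝ) * Real.log 6 := by positivity
  set A := Finset.univ.filter (fun s : Fin N → Fin 3 × Bool =>
      Real.exp (ν * N) ≤ (degC s : ℝ)) with hA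
  set a : ℝ := (A.card : ℝ) with ha
  have ha0 : 0 ≤ a := by positivity
  -- key sum bound
  have hsum : ν * N * a ≤ ∑ s : Fin N → Fin 3 × Bool, Real.log (degC s) := by
    have h1 : ∑ s ∈ A, Real.log (degC s) ≤ ∑ s : Fin N → Fin 3 × Bool, Real.log (degC s) := by
      refine Finset.sum_le_sum_of_subset_of_nonneg (Finset.filter_subset _ _) ?_
      intro s _ _
      refine Real.log_nonneg ?_
      exact_mod_cast one_le_degC s
    have h2 : ν * N * a ≤ ∑ s ∈ A, Real.log (degC s) := by
      have : ∀ s ∈ A, ν * N ≤ Real.log (degC s) := by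
        intro s hs
        have hmem : Real.exp (ν * N) ≤ (degC s : ℝ) := (Finset.mem_filter.mp hs).2
        have hpos : (0:ℝ) < (degC s : ℝ) := lt_of_lt_of_le (Real.exp_pos _) hmem
        exact (Real.le_log_iff_exp_le hpos).mpr hmem
      calc ν * N * a = ∑ _s ∈ A, ν * N := by rw [Finset.sum_const, nsmul_eq_mul]; ring
        _ ≤ ∑ s ∈ A, Real.log (degC s) := Finset.sum_le_sum this
    linarith
  have hdelta : deltaRW 3 N = SC 3 N / ((N : ℝ) * Real.log 6) := by
    unfold deltaRW
    norm_num
  rw [hdelta, SC_eq_log_sum, div_le_iff₀ hNlog]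
  have hrhs : (1 - ν / Real.log 6 * (a / 6 ^ N)) * ((N:ℝ) * Real.log 6)
      = (N:ℝ) * Real.log 6 - ν * N * a / 6 ^ N := by
    field_simp
  rw [hrhs]
  have : ν * N * a / 6 ^ N ≤ (∑ s : Fin N → Fin 3 × Bool, Real.log (degC s)) / 6 ^ N :=
    div_le_div_of_nonneg_right hsum h6.le
  linarith

lemma deltaRW_nonneg (N : ℕ) : 0 ≤ deltaRW 3 N := by
  have hlog6 : 0 ≤ Real.log (2 * (3:ℕ) : ℝ) := Real.log_nonneg (by norm_num)
  refine div_nonneg ?_ (by positivity)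
  refine Finset.sum_nonneg fun C _ => ?_
  refine Real.negMulLog_nonneg (by positivity) ?_
  rw [div_le_one (by positivity)]
  have h := Finset.card_filter_le (Finset.univ : Finset (Fin N → Fin 3 × Bool))
      (fun s => cm s = C)
  calc ((Finset.univ.filter (fun s : Fin N → Fin 3 × Bool => cm s = C)).card : ℝ)
      ≤ ((Finset.univ : Finset (Fin N → Fin 3 × Bool)).card : ℝ) := by exact_mod_cast h
    _ = (6:ℝ) ^ N := by rw [card_univ_walks]; push_cast; ring
    _ ≤ (2 * (3:ℕ) : ℝ) ^ N := by norm_num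

open Filter in
lemma prob_tendsto_one
    (m₁ : ℝ) (hm₁ : 0 < m₁)
    (PN : (N : ℕ) → (Fin N → Fin 3 × Bool) → ℕ)
    (EP : ℕ → ℝ)
    (hmean : ∃ Ce : ℝ, ∀ᶠ N : ℕ in atTop, |EP N - m₁ * N| ≤ Ce * Real.sqrt N)
    (hvar : ∃ Cv : ℝ, ∀ᶠ N : ℕ in atTop,
      (∑ s : Fin N → Fin 3 × Bool, ((PN N s : ℝ) - EP N) ^ 2) / 6 ^ N
        ≤ Cv * N * Real.log N)
    (hdeg : ∀ N : ℕ, ∀ s : Fin N → Fin 3 × Bool, 2 ^ PN N s ≤ degC s)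
    (ν : ℝ) (hν0 : 0 < ν) (hν1 : ν < m₁ * Real.log 2) :
    Tendsto (fun N : ℕ =>
        (((Finset.univ.filter (fun s : Fin N → Fin 3 × Bool =>
            Real.exp (ν * N) ≤ (degC s : ℝ))).card : ℝ) / 6 ^ N))
      atTop (nhds 1) := by
  obtain ⟨Ce, hCe⟩ := hmean
  obtain ⟨Cv, hCv⟩ := hvar
  have hlog2 : 0 < Real.log 2 := Real.log_pos one_lt_two
  set c : ℝ := m₁ - ν / Real.log 2 with hc
  clear_value c
  have hc0 : 0 < c := by
    have : ν / Real.log 2 < m₁ := (div_lt_iff₀ hlog2).mpr (by linarith)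
    rw [hc]; linarith
  -- notation
  set q : ℕ → ℝ := fun N =>
    (((Finset.univ.filter (fun s : Fin N → Fin 3 × Bool =>
        (PN N s : ℝ) * Real.log 2 < ν * N)).card : ℝ) / 6 ^ N) with hq
  set p : ℕ → ℝ := fun N =>
    (((Finset.univ.filter (fun s : Fin N → Fin 3 × Bool =>
        Real.exp (ν * N) ≤ (degC s : ℝ))).card : ℝ) / 6 ^ N) with hp
  have h6 : ∀ N : ℕ, (0:ℝ) < 6 ^ N := fun N => by positivity
  -- q tends to 0
  have hqto : Tendsto q atTop (nhds 0) := by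
    have hhto : Tendsto (fun N : ℕ => (4 * Cv / c ^ 2) * (Real.log N / N)) atTop (nhds 0) := by
      have h1 : Tendsto (fun x : ℝ => Real.log x ^ 1 / (1 * x + 0)) atTop (nhds 0) :=
        Real.tendsto_pow_log_div_mul_add_atTop 1 0 1 one_ne_zero
      have h2 : Tendsto (fun N : ℕ => Real.log N / N) atTop (nhds 0) := by
        have := h1.comp tendsto_natCast_atTop_atTop (α := ℕ)
        simpa [Function.comp_def] using this
      simpa using h2.const_mul (4 * Cv / c ^ 2)
    refine squeeze_zero' ?_ ?_ hhto
    · filter_upwards with N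
      positivity
    · have hsqrt : ∀ᶠ N : ℕ in atTop, ((2 * Ce / c) ^ 2 : ℝ) ≤ (N : ℝ) :=
        tendsto_natCast_atTop_atTop.eventually_ge_atTop _
    -- main Chebyshev estimate
      filter_upwards [hCe, hCv, hsqrt, eventually_ge_atTop 1] with N hCeN hCvN hsN hN1
      have hN' : (0:ℝ) < N := by exact_mod_cast hN1
      -- Ce * sqrt N ≤ (c/2) * N
      have hCs : Ce * Real.sqrt N ≤ c / 2 * N := by
        rcases le_or_gt Ce 0 with h | h
        · have : Ce * Real.sqrt N ≤ 0 :=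
            mul_nonpos_of_nonpos_of_nonneg h (Real.sqrt_nonneg _)
          nlinarith
        · have h1 : (2 * Ce / c) ≤ Real.sqrt N := by
            have := Real.sqrt_le_sqrt hsN
            rwa [Real.sqrt_sq (by positivity)] at this
          have ht : Real.sqrt (N:ℝ) * Real.sqrt (N:ℝ) = (N:ℝ) :=
            Real.mul_self_sqrt (by positivity)
          have h2 : 2 * Ce / c * Real.sqrt N ≤ (N:ℝ) := by
            calc 2 * Ce / c * Real.sqrt N ≤ Real.sqrt N * Real.sqrt N :=
                mul_le_mul_of_nonneg_right h1 (Real.sqrt_nonneg _)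
              _ = (N:ℝ) := ht
          have h3 : Ce * Real.sqrt N = c / 2 * (2 * Ce / c * Real.sqrt N) := by
            field_simp
          rw [h3]
          exact mul_le_mul_of_nonneg_left h2 (by positivity)
      -- EP lower bound
      have hEPlow : m₁ * N - c / 2 * N ≤ EP N := by
        have := abs_le.mp hCeN
        linarith [this.1]
      -- pointwise variance lower bound on the bad set
      have hpt : ∀ s ∈ Finset.univ.filter (fun s : Fin N → Fin 3 × Bool =>
          (PN N s : ℝ) * Real.log 2 < ν * N),
          (c / 2 * N) ^ 2 ≤ ((PN N s : ℝ) - EP N) ^ 2 := by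
        intro s hs
        have hlt : (PN N s : ℝ) * Real.log 2 < ν * N := (Finset.mem_filter.mp hs).2
        have h1 : (PN N s : ℝ) < (m₁ - c) * N := by
          have : (PN N s : ℝ) < ν * N / Real.log 2 := by
            rw [lt_div_iff₀ hlog2]; linarith
          have h2 : ν * N / Real.log 2 = (m₁ - c) * N := by
            rw [hc]; field_simp; ring
          linarith
        have h2 : c / 2 * N ≤ EP N - (PN N s : ℝ) := by nlinarith
        calc (c / 2 * N) ^ 2 ≤ (EP N - (PN N s : ℝ)) ^ 2 :=
            pow_le_pow_left₀ (by positivity) h2 2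
          _ = ((PN N s : ℝ) - EP N) ^ 2 := by ring
      have hBsum : ((Finset.univ.filter (fun s : Fin N → Fin 3 × Bool =>
          (PN N s : ℝ) * Real.log 2 < ν * N)).card : ℝ) * (c / 2 * N) ^ 2
          ≤ Cv * N * Real.log N * 6 ^ N := by
        calc ((Finset.univ.filter (fun s : Fin N → Fin 3 × Bool =>
              (PN N s : ℝ) * Real.log 2 < ν * N)).card : ℝ) * (c / 2 * N) ^ 2
            = ∑ _s ∈ Finset.univ.filter (fun s : Fin N → Fin 3 × Bool =>
              (PN N s : ℝ) * Real.log 2 < ν * N), (c / 2 * N) ^ 2 := by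
              rw [Finset.sum_const, nsmul_eq_mul]
          _ ≤ ∑ s ∈ Finset.univ.filter (fun s : Fin N → Fin 3 × Bool =>
              (PN N s : ℝ) * Real.log 2 < ν * N), ((PN N s : ℝ) - EP N) ^ 2 :=
              Finset.sum_le_sum hpt
          _ ≤ ∑ s : Fin N → Fin 3 × Bool, ((PN N s : ℝ) - EP N) ^ 2 :=
              Finset.sum_le_sum_of_subset_of_nonneg (Finset.filter_subset _ _)
                (fun s _ _ => sq_nonneg _)
          _ ≤ Cv * N * Real.log N * 6 ^ N := by
              rw [div_le_iff₀ (h6 N)] at hCvN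
              exact hCvN
      -- conclude
      have hX : (0:ℝ) < (c / 2 * N) ^ 2 := by positivity
      simp only [hq]
      rw [div_le_iff₀ (h6 N)]
      have heq : (4 * Cv / c ^ 2) * (Real.log N / N) * 6 ^ N * (c / 2 * N) ^ 2
          = Cv * N * Real.log N * 6 ^ N := by
        field_simp
        ring
      nlinarith [hBsum]
  -- p is squeezed between 1 - q and 1
  have hlow : ∀ N : ℕ, 1 - q N ≤ p N := by
    intro N
    have hsub : Finset.univ.filter (fun s : Fin N → Fin 3 × Bool =>
        ¬ ((PN N s : ℝ) * Real.log 2 < ν * N))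
        ⊆ Finset.univ.filter (fun s : Fin N → Fin 3 × Bool =>
        Real.exp (ν * N) ≤ (degC s : ℝ)) := by
      intro s hs
      rw [Finset.mem_filter] at hs ⊢
      refine ⟨hs.1, ?_⟩
      have h1 : ν * N ≤ (PN N s : ℝ) * Real.log 2 := not_lt.mp hs.2
      have h2 : Real.exp ((PN N s : ℝ) * Real.log 2) = (2:ℝ) ^ PN N s := by
        rw [Real.exp_nat_mul, Real.exp_log (by norm_num)]
      have h3 : ((2:ℕ) ^ PN N s : ℝ) ≤ (degC s : ℝ) := by exact_mod_cast hdeg N s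
      calc Real.exp (ν * N) ≤ Real.exp ((PN N s : ℝ) * Real.log 2) := Real.exp_le_exp.mpr h1
        _ = (2:ℝ) ^ PN N s := h2
        _ ≤ (degC s : ℝ) := by push_cast at h3 ⊢; exact h3
    have hcards := Finset.card_filter_add_card_filter_not
      (s := (Finset.univ : Finset (Fin N → Fin 3 × Bool)))
      (p := fun s => (PN N s : ℝ) * Real.log 2 < ν * N)
    have hcard2 : ((Finset.univ.filter (fun s : Fin N → Fin 3 × Bool =>
        ¬ ((PN N s : ℝ) * Real.log 2 < ν * N))).card : ℝ)
        = 6 ^ N - ((Finset.univ.filter (fun s : Fin N → Fin 3 × Bool =>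
        (PN N s : ℝ) * Real.log 2 < ν * N)).card : ℝ) := by
      rw [card_univ_walks] at hcards
      have := congrArg (fun k : ℕ => (k : ℝ)) hcards
      push_cast at this
      linarith
    have hle := Finset.card_le_card hsub
    have hle' : ((Finset.univ.filter (fun s : Fin N → Fin 3 × Bool =>
        ¬ ((PN N s : ℝ) * Real.log 2 < ν * N))).card : ℝ)
        ≤ ((Finset.univ.filter (fun s : Fin N → Fin 3 × Bool =>
        Real.exp (ν * N) ≤ (degC s : ℝ))).card : ℝ) := by exact_mod_cast hle
    simp only [hp, hq]
    rw [sub_le_iff_le_add, ← add_div, le_div_iff₀ (h6 N)]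
    nlinarith [hcard2, hle', h6 N]
  have hup : ∀ N : ℕ, p N ≤ 1 := by
    intro N
    simp only [hp]
    rw [div_le_one (h6 N)]
    have := Finset.card_le_card (Finset.filter_subset (fun s : Fin N → Fin 3 × Bool =>
      Real.exp (ν * N) ≤ (degC s : ℝ)) Finset.univ)
    rw [card_univ_walks] at this
    exact_mod_cast this
  have h1 : Tendsto (fun N => 1 - q N) atTop (nhds 1) := by
    have := (tendsto_const_nhds (x := (1:ℝ)) (f := atTop (α := ℕ))).sub hqto
    simpa using this
  exact tendsto_of_tendsto_of_tendsto_of_le_of_le h1 tendsto_const_nhds hlow hup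


open Filter in
/-- For SRW on `ℤ³`: suppose the pattern counts `P_N` satisfy
`E(P_N) = m₁N + O(√N)` with `m₁ > 0`, `Var(P_N) = O(N ln N)`, and each walk
satisfies `deg C(ω) ≥ 2^{P_N(ω)}`. Then for every `0 < ν < m₁ ln 2`,
`P(deg C ≥ e^{νN}) → 1`, and consequently
`limsup δ_N ≤ 1 - m₁ ln 2/(2 ln 6) < 1`. -/
theorem deltaRW_three_limsup_lt_one
    (m₁ : ℝ) (hm₁ : 0 < m₁)
    (PN : (N : ℕ) → (Fin N → Fin 3 × Bool) → ℕ)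
    (EP : ℕ → ℝ)
    (hEP : ∀ N, EP N = (∑ s : Fin N → Fin 3 × Bool, (PN N s : ℝ)) / 6 ^ N)
    (hmean : ∃ Ce : ℝ, ∀ᶠ N : ℕ in atTop, |EP N - m₁ * N| ≤ Ce * Real.sqrt N)
    (hvar : ∃ Cv : ℝ, ∀ᶠ N : ℕ in atTop,
      (∑ s : Fin N → Fin 3 × Bool, ((PN N s : ℝ) - EP N) ^ 2) / 6 ^ N
        ≤ Cv * N * Real.log N)
    (hdeg : ∀ N : ℕ, ∀ s : Fin N → Fin 3 × Bool, 2 ^ PN N s ≤ degC s) :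
    (∀ ν : ℝ, 0 < ν → ν < m₁ * Real.log 2 →
      Tendsto (fun N : ℕ =>
          (((Finset.univ.filter (fun s : Fin N → Fin 3 × Bool =>
              Real.exp (ν * N) ≤ (degC s : ℝ))).card : ℝ) / 6 ^ N))
        atTop (nhds 1)) ∧
      limsup (fun N : ℕ => deltaRW 3 N) atTop
        ≤ 1 - m₁ * Real.log 2 / (2 * Real.log 6) ∧
      1 - m₁ * Real.log 2 / (2 * Real.log 6) < 1 := by
  have hlog2 : 0 < Real.log 2 := Real.log_pos one_lt_two
  have hlog6 : 0 < Real.log 6 := Real.log_pos (by norm_num)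
  have hpart1 : ∀ ν : ℝ, 0 < ν → ν < m₁ * Real.log 2 →
      Tendsto (fun N : ℕ =>
          (((Finset.univ.filter (fun s : Fin N → Fin 3 × Bool =>
              Real.exp (ν * N) ≤ (degC s : ℝ))).card : ℝ) / 6 ^ N))
        atTop (nhds 1) :=
    fun ν h1 h2 => prob_tendsto_one m₁ hm₁ PN EP hmean hvar hdeg ν h1 h2
  refine ⟨hpart1, ?_, ?_⟩
  · set ν : ℝ := m₁ * Real.log 2 / 2 with hν
    have hν0 : 0 < ν := by rw [hν]; exact div_pos (mul_pos hm₁ hlog2) two_pos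
    have hν1 : ν < m₁ * Real.log 2 := by
      rw [hν]; linarith [mul_pos hm₁ hlog2]
    have hp := hpart1 ν hν0 hν1
    have heq : 1 - ν / Real.log 6 * 1 = 1 - m₁ * Real.log 2 / (2 * Real.log 6) := by
      rw [mul_one, hν, div_div]
    have hgto : Tendsto (fun N : ℕ => 1 - ν / Real.log 6 *
        (((Finset.univ.filter (fun s : Fin N → Fin 3 × Bool =>
            Real.exp (ν * N) ≤ (degC s : ℝ))).card : ℝ) / 6 ^ N)) atTop
        (nhds (1 - m₁ * Real.log 2 / (2 * Real.log 6))) := by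
      have h := (tendsto_const_nhds (x := (1:ℝ)) (f := atTop (α := ℕ))).sub
          (hp.const_mul (ν / Real.log 6))
      rw [mul_one] at h
      rw [← heq, mul_one]
      exact h
    have hle : ∀ᶠ N : ℕ in atTop, deltaRW 3 N ≤ 1 - ν / Real.log 6 *
        (((Finset.univ.filter (fun s : Fin N → Fin 3 × Bool =>
            Real.exp (ν * N) ≤ (degC s : ℝ))).card : ℝ) / 6 ^ N) := by
      filter_upwards [eventually_gt_atTop 0] with N hN
      exact deltaRW_le_one_sub N hN ν hν0.le
    calc limsup (fun N : ℕ => deltaRW 3 N) atTop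
        ≤ limsup (fun N : ℕ => 1 - ν / Real.log 6 *
            (((Finset.univ.filter (fun s : Fin N → Fin 3 × Bool =>
                Real.exp (ν * N) ≤ (degC s : ℝ))).card : ℝ) / 6 ^ N)) atTop :=
          limsup_le_limsup hle
            (isCoboundedUnder_le_of_eventually_le atTop
              (Eventually.of_forall fun N => deltaRW_nonneg N))
            hgto.isBoundedUnder_le
      _ = 1 - m₁ * Real.log 2 / (2 * Real.log 6) := hgto.limsup_eq
  · have h0 : 0 < m₁ * Real.log 2 / (2 * Real.log 6) :=
      div_pos (mul_pos hm₁ hlog2) (by positivity)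
    linarith
end
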